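/- Let F be a weakly convex sparseness measure with parameter ρ ≤ 0, J(x) = Σ_{i=1}^N F(x_i), let γ ∈ [0,1) be a null-space constant bound for (J,A,K), M0 > 0, and let C1, C2, C3, C4, C5 be the associated constants. Let ‖x*‖₀ ≤ K, y = A x* + e, ‖I − A AᵀB‖₂ ≤ ζ < 1, κ > 0, μ > 1, and d = ‖I − AᵀBA‖₂². Suppose x ∈ ℝ^N satisfies ‖x − x*‖₂ ≤ M0, (−4ρ)·‖x − x*‖₂ ≤ C1, ‖y − A x‖₂ ≤ C5·κ, and ‖x − x*‖₂ ≥ μ·C3·κ + C4·‖e‖₂. Then for any gradient selection g with g_i ∈ ∂F(x_i), the next APGG iterate x⁺ = AᵀB y + (I − AᵀBA)(x − κ·g) satisfies ‖x⁺ − x*‖₂² ≤ ‖x − x*‖₂² − (μ−1)·d·α²·N·κ². -/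

import Mathlib

open Filter Set

/-- Weak convexity on `[0,∞)` with parameter `ρ`. -/
def WeaklyConvexOnNonneg (F : ℝ → ℝ) (ρ : ℝ) : Prop :=
  ∀ t₁ t₂ : ℝ, 0 ≤ t₁ → 0 ≤ t₂ → ∀ l : ℝ, 0 ≤ l → l ≤ 1 →
    F (l * t₁ + (1 - l) * t₂) ≤
      l * F t₁ + (1 - l) * F t₂ - ρ * l * (1 - l) * (t₁ - t₂) ^ 2

/-- `F` is a weakly convex sparseness measure with weak-convexity parameter `ρ ≤ 0`. -/
structure IsWCSM (F : ℝ → ℝ) (ρ : ℝ) : Prop where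
  zero : F 0 = 0
  even : ∀ t, F (-t) = F t
  nontrivial : ∃ t, F t ≠ 0
  mono : ∀ s t : ℝ, 0 ≤ s → s ≤ t → F s ≤ F t
  ratio_anti : ∀ s t : ℝ, 0 < s → s ≤ t → F t / t ≤ F s / s
  rho_nonpos : ρ ≤ 0
  wconv : WeaklyConvexOnNonneg F ρ

/-- `α = lim_{t→0⁺} F(t)/t`, finite and positive, with `F(t) ≤ α|t|` for all `t`. -/
def IsAlpha (F : ℝ → ℝ) (α : ℝ) : Prop :=
  0 < α ∧ Tendsto (fun t => F t / t) (nhdsWithin 0 (Set.Ioi 0)) (nhds α) ∧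
    ∀ t : ℝ, F t ≤ α * |t|

/-- The generalized gradient set `∂F(t)`; by convention `∂F(0) = {0}`. -/
noncomputable def genGrad (F : ℝ → ℝ) (t : ℝ) : Set ℝ :=
  if t = 0 then {0}
  else {f : ℝ | ∀ ν : ℝ,
    ν * f ≤ Filter.limsup (fun θ => (F (t + θ * ν) - F t) / θ) (nhdsWithin 0 (Set.Ioi 0))}

/-- Euclidean (`ℓ2`) norm of a vector. -/
noncomputable def l2 {n : ℕ} (x : Fin n → ℝ) : ℝ := Real.sqrt (∑ i, (x i) ^ 2)

/-- `ℓ1` norm of a vector. -/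
def l1 {n : ℕ} (x : Fin n → ℝ) : ℝ := ∑ i, |x i|

/-- `ℓ0` "norm": number of nonzero entries. -/
noncomputable def l0 {n : ℕ} (x : Fin n → ℝ) : ℕ :=
  (Finset.univ.filter (fun i => x i ≠ 0)).card

/-- `z_S`: the vector equal to `z` on `S` and zero elsewhere. -/
def restr {n : ℕ} (x : Fin n → ℝ) (S : Finset (Fin n)) : Fin n → ℝ :=
  fun i => if i ∈ S then x i else 0

/-- `γ` is a null-space-constant bound for `(J, A, K)`. -/
def NSCBound {M N : ℕ} (J : (Fin N → ℝ) → ℝ) (A : Matrix (Fin M) (Fin N) ℝ)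
    (K : ℕ) (γ : ℝ) : Prop :=
  ∀ z : Fin N → ℝ, A.mulVec z = 0 → ∀ S : Finset (Fin N), S.card ≤ K →
    J (restr z S) ≤ γ * J (restr z Sᶜ)

/-- Spectral norm (`ℓ2`-operator norm) of a matrix. -/
noncomputable def opNorm2 {m n : ℕ} (A : Matrix (Fin m) (Fin n) ℝ) : ℝ :=
  sSup {c : ℝ | ∃ v : Fin n → ℝ, l2 v ≤ 1 ∧ c = l2 (A.mulVec v)}

/-! ### Auxiliary lemmas -/

section Aux

lemma l2_nonneg {n : ℕ} (x : Fin n → ℝ) : 0 ≤ l2 x := Real.sqrt_nonneg _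

lemma sq_l2 {n : ℕ} (x : Fin n → ℝ) : l2 x ^ 2 = ∑ i, x i ^ 2 :=
  Real.sq_sqrt (by positivity)

lemma l2_eq_norm {n : ℕ} (x : Fin n → ℝ) :
    l2 x = ‖(WithLp.equiv 2 (Fin n → ℝ)).symm x‖ := by
  rw [EuclideanSpace.norm_eq]
  simp [l2, Real.norm_eq_abs, sq_abs]

lemma l2_add_le {n : ℕ} (x y : Fin n → ℝ) : l2 (x + y) ≤ l2 x + l2 y := by
  rw [l2_eq_norm, l2_eq_norm, l2_eq_norm]
  exact norm_add_le _ _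

lemma l2_smul {n : ℕ} (c : ℝ) (x : Fin n → ℝ) : l2 (c • x) = |c| * l2 x := by
  rw [l2_eq_norm, l2_eq_norm]
  have : (WithLp.equiv 2 (Fin n → ℝ)).symm (c • x)
      = c • (WithLp.equiv 2 (Fin n → ℝ)).symm x := rfl
  rw [this, norm_smul, Real.norm_eq_abs]

lemma l2_neg {n : ℕ} (x : Fin n → ℝ) : l2 (-x) = l2 x := by
  simp [l2]

/-- inner product of two vectors -/
def ip {n : ℕ} (u v : Fin n → ℝ) : ℝ := ∑ i, u i * v i

lemma ip_comm {n : ℕ} (u v : Fin n → ℝ) : ip u v = ip v u := by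
  unfold ip; exact Finset.sum_congr rfl fun i _ => mul_comm _ _

lemma ip_le_l2 {n : ℕ} (x y : Fin n → ℝ) : ip x y ≤ l2 x * l2 y := by
  have h := real_inner_le_norm ((WithLp.equiv 2 (Fin n → ℝ)).symm x)
    ((WithLp.equiv 2 (Fin n → ℝ)).symm y)
  rw [← l2_eq_norm, ← l2_eq_norm] at h
  simpa [ip, PiLp.inner_apply, RCLike.inner_apply, starRingEnd_apply, mul_comm] using h

lemma l2_zero {n : ℕ} : l2 (0 : Fin n → ℝ) = 0 := by simp [l2]

lemma l2_eq_zero {n : ℕ} {x : Fin n → ℝ} (h : l2 x = 0) : x = 0 := by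
  have h2 : ∑ i, x i ^ 2 = 0 := by
    have := sq_l2 x; rw [h] at this; linarith [this]
  funext i
  have hz := (Finset.sum_eq_zero_iff_of_nonneg (fun i _ => sq_nonneg (x i))).1 h2 i
    (Finset.mem_univ i)
  simpa using pow_eq_zero_iff (n := 2) (by norm_num) |>.1 hz

lemma l2_mono {n : ℕ} {x y : Fin n → ℝ} (h : ∀ i, |x i| ≤ |y i|) : l2 x ≤ l2 y := by
  apply Real.sqrt_le_sqrt
  apply Finset.sum_le_sum
  intro i _
  rw [← sq_abs (x i), ← sq_abs (y i)]
  exact pow_le_pow_left₀ (abs_nonneg _) (h i) 2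

lemma abs_le_l2 {n : ℕ} (x : Fin n → ℝ) (i : Fin n) : |x i| ≤ l2 x := by
  rw [← Real.sqrt_sq_eq_abs]
  apply Real.sqrt_le_sqrt
  exact Finset.single_le_sum (f := fun i => x i ^ 2) (fun i _ => sq_nonneg _) (Finset.mem_univ i)

lemma l2_le_sum {n : ℕ} {x : Fin n → ℝ} (h : ∀ i, 0 ≤ x i) : l2 x ≤ ∑ i, x i := by
  rw [← Real.sqrt_sq (Finset.sum_nonneg fun i _ => h i)]
  apply Real.sqrt_le_sqrt
  exact Finset.sum_sq_le_sq_sum_of_nonneg fun i _ => h i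

lemma sum_abs_le_sqrt_l2 {n : ℕ} (x : Fin n → ℝ) :
    ∑ i, |x i| ≤ Real.sqrt n * l2 x := by
  have h := ip_le_l2 (fun _ : Fin n => (1:ℝ)) (fun i => |x i|)
  have h1 : l2 (fun _ : Fin n => (1:ℝ)) = Real.sqrt n := by simp [l2]
  have h2 : l2 (fun i => |x i|) = l2 x := by simp [l2, sq_abs]
  rw [h1, h2] at h
  simpa [ip] using h

lemma l2_sq_expand {n : ℕ} (u w : Fin n → ℝ) :
    l2 (u + w) ^ 2 = l2 u ^ 2 + 2 * ip u w + l2 w ^ 2 := by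
  rw [sq_l2, sq_l2, sq_l2]
  unfold ip
  rw [Finset.mul_sum, ← Finset.sum_add_distrib, ← Finset.sum_add_distrib]
  apply Finset.sum_congr rfl
  intro i _
  simp only [Pi.add_apply]
  ring

lemma l2_sq_sub_smul {n : ℕ} (u w : Fin n → ℝ) (c : ℝ) :
    l2 (u - c • w) ^ 2 = l2 u ^ 2 - 2 * c * ip u w + c ^ 2 * l2 w ^ 2 := by
  rw [sq_l2, sq_l2, sq_l2]
  unfold ip
  rw [Finset.mul_sum, Finset.mul_sum, ← Finset.sum_sub_distrib, ← Finset.sum_add_distrib]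
  apply Finset.sum_congr rfl
  intro i _
  simp only [Pi.sub_apply, Pi.smul_apply, smul_eq_mul]
  ring

lemma ip_eq_dot {n : ℕ} (u v : Fin n → ℝ) : ip u v = dotProduct u v := rfl

lemma ip_transpose {m n : ℕ} (A : Matrix (Fin m) (Fin n) ℝ) (u : Fin n → ℝ)
    (w : Fin m → ℝ) : ip u (A.transpose.mulVec w) = ip (A.mulVec u) w := by
  rw [ip_eq_dot, ip_eq_dot, Matrix.dotProduct_mulVec, Matrix.vecMul_transpose]

lemma opSet_bdd {m n : ℕ} (A : Matrix (Fin m) (Fin n) ℝ) :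
    BddAbove {c : ℝ | ∃ v : Fin n → ℝ, l2 v ≤ 1 ∧ c = l2 (A.mulVec v)} := by
  use Real.sqrt (∑ i, ∑ j, A i j ^ 2)
  rintro c ⟨v, hv, rfl⟩
  have key : ∀ i, (A.mulVec v) i ^ 2 ≤ ∑ j, A i j ^ 2 := by
    intro i
    have h1 : (A.mulVec v) i = ∑ j, A i j * v j := rfl
    have h2 : ∑ j, A i j * v j ≤ l2 (fun j => A i j) * l2 v := ip_le_l2 _ _
    have h3 : ∑ j, (-(A i j)) * v j ≤ l2 (fun j => -(A i j)) * l2 v := ip_le_l2 _ _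
    have h4 : l2 (fun j => -(A i j)) = l2 (fun j => A i j) := by simp [l2]
    have h5 : |∑ j, A i j * v j| ≤ l2 (fun j => A i j) * l2 v := by
      rw [abs_le]; constructor
      · rw [h4] at h3
        have : -(∑ j, A i j * v j) = ∑ j, (-(A i j)) * v j := by
          rw [← Finset.sum_neg_distrib]; congr 1; funext j; ring
        linarith [h3]
      · exact h2
    have h6 : l2 (fun j => A i j) * l2 v ≤ l2 (fun j => A i j) * 1 :=
      mul_le_mul_of_nonneg_left hv (l2_nonneg _)
    have h7 : (A.mulVec v) i ^ 2 ≤ (l2 (fun j => A i j)) ^ 2 := by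
      rw [← sq_abs ((A.mulVec v) i)]
      apply pow_le_pow_left₀ (abs_nonneg _)
      rw [h1]; linarith [h5, h6]
    calc (A.mulVec v) i ^ 2 ≤ (l2 (fun j => A i j)) ^ 2 := h7
      _ = ∑ j, A i j ^ 2 := sq_l2 _
  have : l2 (A.mulVec v) ^ 2 ≤ ∑ i, ∑ j, A i j ^ 2 := by
    rw [sq_l2]; exact Finset.sum_le_sum fun i _ => key i
  have hnn : (0:ℝ) ≤ ∑ i, ∑ j, A i j ^ 2 := by positivity
  nlinarith [l2_nonneg (A.mulVec v), Real.sq_sqrt hnn, Real.sqrt_nonneg (∑ i, ∑ j, A i j ^ 2)]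

lemma opNorm2_nonneg {m n : ℕ} (A : Matrix (Fin m) (Fin n) ℝ) : 0 ≤ opNorm2 A := by
  apply le_csSup (opSet_bdd A)
  exact ⟨0, by simp [l2_zero], by simp [Matrix.mulVec_zero, l2_zero]⟩

lemma l2_mulVec_le {m n : ℕ} (A : Matrix (Fin m) (Fin n) ℝ) (v : Fin n → ℝ) :
    l2 (A.mulVec v) ≤ opNorm2 A * l2 v := by
  rcases eq_or_lt_of_le (l2_nonneg v) with h0 | h0
  · rw [l2_eq_zero h0.symm]
    simp [Matrix.mulVec_zero, l2_zero]
  · have hmem : (l2 v)⁻¹ * l2 (A.mulVec v) ∈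
        {c : ℝ | ∃ w : Fin n → ℝ, l2 w ≤ 1 ∧ c = l2 (A.mulVec w)} := by
      refine ⟨(l2 v)⁻¹ • v, ?_, ?_⟩
      · rw [l2_smul, abs_of_pos (inv_pos.2 h0), inv_mul_cancel₀ (ne_of_gt h0)]
      · rw [Matrix.mulVec_smul, l2_smul, abs_of_pos (inv_pos.2 h0)]
    have := le_csSup (opSet_bdd A) hmem
    calc l2 (A.mulVec v) = ((l2 v)⁻¹ * l2 (A.mulVec v)) * l2 v := by
          field_simp
      _ ≤ opNorm2 A * l2 v := by
          apply mul_le_mul_of_nonneg_right this (le_of_lt h0)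

end Aux

section Fprops
variable {F : ℝ → ℝ} {ρ α : ℝ}

lemma F_nonneg (hF : IsWCSM F ρ) (t : ℝ) : 0 ≤ F t := by
  rcases le_or_gt 0 t with h | h
  · have := hF.mono 0 t le_rfl h; rwa [hF.zero] at this
  · have := hF.mono 0 (-t) le_rfl (by linarith); rw [hF.zero, hF.even] at this; exact this

lemma F_abs (hF : IsWCSM F ρ) (t : ℝ) : F t = F |t| := by
  rcases le_or_gt 0 t with h | h
  · rw [abs_of_nonneg h]
  · rw [abs_of_neg h, hF.even]

lemma F_subadd_nonneg (hF : IsWCSM F ρ) {a b : ℝ} (ha : 0 ≤ a) (hb : 0 ≤ b) :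
    F (a + b) ≤ F a + F b := by
  rcases eq_or_lt_of_le ha with rfl | ha'
  · simp [hF.zero]
  rcases eq_or_lt_of_le hb with rfl | hb'
  · simp [hF.zero]
  have hs : 0 < a + b := by linarith
  have r1 : F (a + b) / (a + b) ≤ F a / a := hF.ratio_anti a (a+b) ha' (by linarith)
  have r2 : F (a + b) / (a + b) ≤ F b / b := hF.ratio_anti b (a+b) hb' (by linarith)
  have e1 : F (a+b) / (a+b) * a ≤ F a := by
    rw [div_mul_eq_mul_div, div_le_iff₀ hs]
    have := mul_le_mul_of_nonneg_right r1 (le_of_lt ha')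
    rw [div_mul_eq_mul_div, div_mul_eq_mul_div, div_le_div_iff₀ hs ha'] at this
    nlinarith
  have e2 : F (a+b) / (a+b) * b ≤ F b := by
    rw [div_mul_eq_mul_div, div_le_iff₀ hs]
    have := mul_le_mul_of_nonneg_right r2 (le_of_lt hb')
    rw [div_mul_eq_mul_div, div_mul_eq_mul_div, div_le_div_iff₀ hs hb'] at this
    nlinarith
  have : F (a+b) / (a+b) * a + F (a+b) / (a+b) * b = F (a+b) := by
    field_simp
  linarith

lemma F_subadd (hF : IsWCSM F ρ) (s t : ℝ) : F (s + t) ≤ F s + F t := by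
  have h1 : F (s + t) ≤ F (|s| + |t|) := by
    rw [F_abs hF (s+t)]
    exact hF.mono _ _ (abs_nonneg _) (abs_add_le s t)
  calc F (s+t) ≤ F (|s| + |t|) := h1
    _ ≤ F |s| + F |t| := F_subadd_nonneg hF (abs_nonneg s) (abs_nonneg t)
    _ = F s + F t := by rw [← F_abs hF, ← F_abs hF]

/-- Key limsup bound extraction. -/
lemma grad_le_of_quotient_le (hF : IsWCSM F ρ) (hα : IsAlpha F α)
    {t f ν c δ : ℝ} (hδ : 0 < δ)
    (hb : ν * f ≤ Filter.limsup (fun θ => (F (t + θ * ν) - F t) / θ) (nhdsWithin 0 (Set.Ioi 0)))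
    (hc : ∀ θ : ℝ, 0 < θ → θ < δ → (F (t + θ * ν) - F t) / θ ≤ c) :
    ν * f ≤ c := by
  haveI : (nhdsWithin (0:ℝ) (Set.Ioi 0)).NeBot := nhdsGT_neBot 0
  refine hb.trans (Filter.limsup_le_of_le ?_ ?_)
  · refine Filter.isCoboundedUnder_le_of_eventually_le (nhdsWithin 0 (Set.Ioi 0))
      (x := -(α * |ν|)) ?_
    filter_upwards [self_mem_nhdsWithin] with θ hθ
    have hθ' : (0:ℝ) < θ := hθ
    have h1 : F t ≤ F (t + θ * ν) + F (θ * ν) := by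
      have := F_subadd hF (t + θ * ν) (-(θ * ν))
      simpa [hF.even] using this
    have h2 : F (θ * ν) ≤ α * |θ * ν| := hα.2.2 _
    have h3 : |θ * ν| = θ * |ν| := by rw [abs_mul, abs_of_pos hθ']
    rw [le_div_iff₀ hθ']
    have h4 : α * |θ * ν| = α * |ν| * θ := by rw [h3]; ring
    linarith
  · filter_upwards [Ioo_mem_nhdsGT_of_mem (Set.left_mem_Ico.2 hδ)] with θ hθ
    exact hc θ hθ.1 hθ.2

lemma grad_nonneg_pos (hF : IsWCSM F ρ) (hα : IsAlpha F α) {t f : ℝ} (ht : 0 < t)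
    (hb : ∀ ν : ℝ, ν * f ≤ Filter.limsup
      (fun θ => (F (t + θ * ν) - F t) / θ) (nhdsWithin 0 (Set.Ioi 0))) :
    0 ≤ f := by
  have := grad_le_of_quotient_le hF hα (ν := -1) (c := 0) (δ := t) ht (hb (-1)) ?_
  · linarith
  · intro θ hθ hθt
    have h1 : t + θ * (-1) = t - θ := by ring
    rw [h1, div_nonpos_iff]
    right
    constructor
    · have := hF.mono (t - θ) t (by linarith) (by linarith)
      linarith
    · linarith

lemma grad_le_alpha_pos (hF : IsWCSM F ρ) (hα : IsAlpha F α) {t f : ℝ} (ht : 0 < t)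
    (hb : ∀ ν : ℝ, ν * f ≤ Filter.limsup
      (fun θ => (F (t + θ * ν) - F t) / θ) (nhdsWithin 0 (Set.Ioi 0))) :
    f ≤ α := by
  have := grad_le_of_quotient_le hF hα (ν := 1) (c := α) (δ := 1) one_pos (hb 1) ?_
  · linarith
  · intro θ hθ hθ1
    have hts : 0 < t + θ * 1 := by nlinarith
    have r1 : F (t + θ * 1) / (t + θ * 1) ≤ F t / t := hF.ratio_anti t _ ht (by nlinarith)
    have hFt : F t ≤ α * t := by
      have := hα.2.2 t; rwa [abs_of_pos ht] at this
    rw [div_le_iff₀ hθ]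
    rw [div_le_div_iff₀ hts ht] at r1
    have hα0 : 0 < α := hα.1
    nlinarith [F_nonneg hF t, F_nonneg hF (t + θ * 1)]

lemma subgrad_pos (hF : IsWCSM F ρ) (hα : IsAlpha F α) {t f : ℝ} (ht : 0 < t)
    (hb : ∀ ν : ℝ, ν * f ≤ Filter.limsup
      (fun θ => (F (t + θ * ν) - F t) / θ) (nhdsWithin 0 (Set.Ioi 0))) :
    ∀ s : ℝ, F t + f * (s - t) + ρ * (s - t) ^ 2 ≤ F s := by
  have hf0 : 0 ≤ f := grad_nonneg_pos hF hα ht hb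
  have main : ∀ s : ℝ, 0 ≤ s → F t + f * (s - t) + ρ * (s - t) ^ 2 ≤ F s := by
    intro s hs
    have := grad_le_of_quotient_le hF hα (ν := s - t)
      (c := F s - F t - ρ * (s - t)^2) (δ := 1) one_pos (hb (s - t)) ?_
    · nlinarith [this]
    · intro θ hθ hθ1
      have hw := hF.wconv s t hs (le_of_lt ht) θ (le_of_lt hθ) (le_of_lt hθ1)
      have harg : t + θ * (s - t) = θ * s + (1 - θ) * t := by ring
      rw [harg, div_le_iff₀ hθ]
      have hρ : ρ * θ * (s - t)^2 ≤ 0 := by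
        have h9 := mul_nonneg (le_of_lt hθ) (sq_nonneg (s - t))
        nlinarith [hF.rho_nonpos]
      nlinarith
  intro s
  rcases le_or_gt 0 s with hs | hs
  · exact main s hs
  · have h2 := main (-s) (by linarith)
    rw [hF.even] at h2
    have hst : f * (s - t) ≤ f * (-s - t) := by nlinarith
    have hsq : ρ * (s - t)^2 ≤ ρ * (-s - t)^2 := by
      nlinarith [mul_nonneg (mul_nonneg (neg_nonneg.2 hF.rho_nonpos)
        (neg_nonneg.2 (le_of_lt hs))) (le_of_lt ht)]
    nlinarith

lemma genGrad_flip (hF : IsWCSM F ρ) {t f : ℝ}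
    (hb : ∀ ν : ℝ, ν * f ≤ Filter.limsup
      (fun θ => (F (t + θ * ν) - F t) / θ) (nhdsWithin 0 (Set.Ioi 0))) :
    ∀ ν : ℝ, ν * (-f) ≤ Filter.limsup
      (fun θ => (F (-t + θ * ν) - F (-t)) / θ) (nhdsWithin 0 (Set.Ioi 0)) := by
  intro ν
  have h := hb (-ν)
  have heq : (fun θ => (F (t + θ * (-ν)) - F t) / θ)
      = (fun θ => (F (-t + θ * ν) - F (-t)) / θ) := by
    funext θ
    have : -t + θ * ν = -(t + θ * (-ν)) := by ring
    rw [this, hF.even, hF.even]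
  rw [heq] at h
  calc ν * (-f) = (-ν) * f := by ring
    _ ≤ _ := h

lemma subgrad (hF : IsWCSM F ρ) (hα : IsAlpha F α) {t f : ℝ} (hg : f ∈ genGrad F t) :
    ∀ s : ℝ, F t + f * (s - t) + ρ * (s - t) ^ 2 ≤ F s := by
  intro s
  rcases eq_or_ne t 0 with rfl | ht0
  · rw [genGrad, if_pos rfl] at hg
    rw [Set.mem_singleton_iff] at hg
    subst hg
    rw [hF.zero]
    have : ρ * (s - 0)^2 ≤ 0 := by nlinarith [hF.rho_nonpos, sq_nonneg s]
    have := F_nonneg hF s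
    nlinarith
  · rw [genGrad, if_neg ht0] at hg
    have hb : ∀ ν : ℝ, ν * f ≤ Filter.limsup
        (fun θ => (F (t + θ * ν) - F t) / θ) (nhdsWithin 0 (Set.Ioi 0)) := hg
    rcases lt_or_gt_of_ne ht0 with htn | htp
    · have hb' := genGrad_flip hF hb
      have h2 := subgrad_pos hF hα (by linarith : (0:ℝ) < -t) hb' (-s)
      rw [hF.even t, hF.even s] at h2
      have e : F t + -f * (-s - -t) + ρ * (-s - -t)^2
          = F t + f * (s - t) + ρ * (s - t)^2 := by ring
      rw [e] at h2
      exact h2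
    · exact subgrad_pos hF hα htp hb s

lemma grad_abs_le (hF : IsWCSM F ρ) (hα : IsAlpha F α) {t f : ℝ} (hg : f ∈ genGrad F t) :
    |f| ≤ α := by
  rcases eq_or_ne t 0 with rfl | ht0
  · rw [genGrad, if_pos rfl, Set.mem_singleton_iff] at hg
    subst hg; simp [le_of_lt hα.1]
  · rw [genGrad, if_neg ht0] at hg
    have hb : ∀ ν : ℝ, ν * f ≤ Filter.limsup
        (fun θ => (F (t + θ * ν) - F t) / θ) (nhdsWithin 0 (Set.Ioi 0)) := hg
    rcases lt_or_gt_of_ne ht0 with htn | htp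
    · have hb' := genGrad_flip hF hb
      have h1 := grad_nonneg_pos hF hα (by linarith : (0:ℝ) < -t) hb'
      have h2 := grad_le_alpha_pos hF hα (by linarith : (0:ℝ) < -t) hb'
      rw [abs_le]; constructor <;> linarith
    · have h1 := grad_nonneg_pos hF hα htp hb
      have h2 := grad_le_alpha_pos hF hα htp hb
      rw [abs_le]; constructor <;> linarith

lemma F_min_bound {M0 : ℝ} (hF : IsWCSM F ρ) (hM0 : 0 < M0) (u : ℝ) :
    F M0 / M0 * min |u| M0 ≤ F u := by
  set c0 := F M0 / M0 with hc0
  have hc0n : 0 ≤ c0 := div_nonneg (F_nonneg hF M0) (le_of_lt hM0)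
  rw [F_abs hF u]
  rcases le_or_gt |u| M0 with h | h
  · rw [min_eq_left h]
    rcases eq_or_lt_of_le (abs_nonneg u) with h0 | h0
    · rw [← h0, hF.zero, mul_zero]
    · have := hF.ratio_anti |u| M0 h0 h
      rw [div_le_div_iff₀ hM0 h0] at this
      have : c0 * |u| ≤ F |u| := by
        rw [hc0, div_mul_eq_mul_div, div_le_iff₀ hM0]
        nlinarith
      linarith
  · rw [min_eq_right (le_of_lt h)]
    have h1 : F M0 ≤ F |u| := hF.mono M0 |u| (le_of_lt hM0) (le_of_lt h)
    have : c0 * M0 = F M0 := by rw [hc0]; field_simp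
    linarith

end Fprops

lemma key_J {M N : ℕ} (F : ℝ → ℝ) (ρ α : ℝ) (hF : IsWCSM F ρ) (hα : IsAlpha F α)
    {M0 γ : ℝ} (hM0 : 0 < M0) (hγ0 : 0 ≤ γ) (hγ1 : γ < 1)
    (A : Matrix (Fin M) (Fin N) ℝ) (K : ℕ)
    (hNSC : NSCBound (fun x => ∑ i, F (x i)) A K γ)
    (xs x z v : Fin N → ℝ) (hxs : l0 xs ≤ K)
    (hzv : x - xs = z + v) (hz : A.mulVec z = 0)
    (hball : l2 (x - xs) ≤ M0) :
    F M0 / M0 * ((1 - γ) / (1 + γ)) * l2 (x - xs)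
      - (F M0 / M0 * ((1 - γ) / (1 + γ)) + α * Real.sqrt N) * l2 v
      ≤ (∑ i, F (x i)) - ∑ i, F (xs i) := by
  classical
  set c0 := F M0 / M0 with hc0
  have hc0n : 0 ≤ c0 := div_nonneg (F_nonneg hF M0) (le_of_lt hM0)
  set τ := (1 - γ) / (1 + γ) with hτ
  have hγp : (0:ℝ) < 1 + γ := by linarith
  have hτn : 0 ≤ τ := div_nonneg (by linarith) (le_of_lt hγp)
  have hτ1 : τ ≤ 1 := by
    rw [hτ, div_le_one hγp]; linarith
  set h := x - xs with hh
  have hpt : ∀ i, x i - xs i = z i + v i := by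
    intro i
    have h1 := congrFun hzv i
    simp only [hh, Pi.sub_apply, Pi.add_apply] at h1
    exact h1
  have hx_eq : ∀ i, x i = xs i + z i + v i := by
    intro i; have := hpt i; linarith
  have hv_eq : ∀ i, h i - z i = v i := by
    intro i
    simp only [hh, Pi.sub_apply]
    have := hpt i; linarith
  have step1 : (∑ i, F (xs i + z i)) - α * Real.sqrt N * l2 v ≤ ∑ i, F (x i) := by
    have h1 : ∀ i, F (xs i + z i) - F (v i) ≤ F (x i) := by
      intro i
      have := F_subadd hF (x i) (-(v i))
      rw [hx_eq i] at this ⊢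
      have e : xs i + z i + v i + -(v i) = xs i + z i := by ring
      rw [e, hF.even] at this
      linarith
    have h2 : ∑ i, F (v i) ≤ α * Real.sqrt N * l2 v := by
      have hb : ∑ i, F (v i) ≤ ∑ i, α * |v i| := by
        apply Finset.sum_le_sum; intro i _; exact hα.2.2 _
      have hc : ∑ i, α * |v i| = α * ∑ i, |v i| := by rw [Finset.mul_sum]
      have hd := sum_abs_le_sqrt_l2 v
      have hα0 : (0:ℝ) < α := hα.1
      calc ∑ i, F (v i) ≤ α * ∑ i, |v i| := by rw [← hc]; exact hb
        _ ≤ α * (Real.sqrt N * l2 v) := by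
            apply mul_le_mul_of_nonneg_left hd (le_of_lt hα0)
        _ = α * Real.sqrt N * l2 v := by ring
    have h3 : (∑ i, F (xs i + z i)) - ∑ i, F (v i) ≤ ∑ i, F (x i) := by
      rw [← Finset.sum_sub_distrib]
      apply Finset.sum_le_sum; intro i _; exact h1 i
    linarith
  set S := Finset.univ.filter (fun i => xs i ≠ 0) with hS
  have hcard : S.card ≤ K := hxs
  have hJS := hNSC z hz S hcard
  simp only at hJS
  have hsum_restr : ∀ (T : Finset (Fin N)), (∑ i, F (restr z T i)) = ∑ i ∈ T, F (z i) := by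
    intro T
    rw [← Finset.sum_subset (Finset.subset_univ T)
      (fun i _ hi => by simp [restr, hi, hF.zero])]
    apply Finset.sum_congr rfl
    intro i hi
    simp [restr, hi]
  rw [hsum_restr S, hsum_restr Sᶜ] at hJS
  have hSc : ∀ i, i ∈ Sᶜ ↔ xs i = 0 := by
    intro i; simp [hS]
  have hJz_split : (∑ i, F (z i)) = (∑ i ∈ S, F (z i)) + ∑ i ∈ Sᶜ, F (z i) := by
    rw [← Finset.sum_add_sum_compl S]
  have hJSc_nonneg : 0 ≤ ∑ i ∈ Sᶜ, F (z i) :=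
    Finset.sum_nonneg fun i _ => F_nonneg hF _
  have step2 : τ * ∑ i, F (z i) ≤ (∑ i, F (xs i + z i)) - ∑ i, F (xs i) := by
    have hs1 : ∀ i ∈ S, F (xs i) - F (z i) ≤ F (xs i + z i) := by
      intro i _
      have := F_subadd hF (xs i + z i) (-(z i))
      have e : xs i + z i + -(z i) = xs i := by ring
      rw [e, hF.even] at this
      linarith
    have hs2 : ∀ i ∈ Sᶜ, F (xs i + z i) = F (z i) := by
      intro i hi
      rw [(hSc i).1 hi, zero_add]
    have hsplitL : (∑ i, F (xs i + z i))
        = (∑ i ∈ S, F (xs i + z i)) + ∑ i ∈ Sᶜ, F (xs i + z i) := by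
      rw [← Finset.sum_add_sum_compl S]
    have hsplitXs : (∑ i, F (xs i)) = ∑ i ∈ S, F (xs i) := by
      rw [← Finset.sum_add_sum_compl S (fun i => F (xs i))]
      have : ∑ i ∈ Sᶜ, F (xs i) = 0 := by
        apply Finset.sum_eq_zero; intro i hi; rw [(hSc i).1 hi, hF.zero]
      rw [this, add_zero]
    have hA : (∑ i ∈ S, F (xs i)) - (∑ i ∈ S, F (z i)) + ∑ i ∈ Sᶜ, F (z i)
        ≤ ∑ i, F (xs i + z i) := by
      rw [hsplitL]
      have h1 : (∑ i ∈ S, F (xs i)) - (∑ i ∈ S, F (z i)) ≤ ∑ i ∈ S, F (xs i + z i) := by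
        rw [← Finset.sum_sub_distrib]
        exact Finset.sum_le_sum hs1
      have h2 : (∑ i ∈ Sᶜ, F (z i)) = ∑ i ∈ Sᶜ, F (xs i + z i) :=
        Finset.sum_congr rfl fun i hi => (hs2 i hi).symm
      linarith
    have hγJ : τ * ∑ i, F (z i) ≤ (1 - γ) * ∑ i ∈ Sᶜ, F (z i) := by
      rw [hJz_split, hτ]
      rw [div_mul_eq_mul_div, div_le_iff₀ hγp]
      nlinarith [hJS, hJSc_nonneg]
    have : (1 - γ) * (∑ i ∈ Sᶜ, F (z i)) ≤ (∑ i ∈ Sᶜ, F (z i)) - ∑ i ∈ S, F (z i) := by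
      nlinarith [hJS]
    rw [hsplitXs]
    linarith
  have step3 : c0 * (l2 h - l2 v) ≤ ∑ i, F (z i) := by
    set a : Fin N → ℝ := fun i => min |z i| |h i| with ha
    have han : ∀ i, 0 ≤ a i := fun i => le_min (abs_nonneg _) (abs_nonneg _)
    have hFa : ∀ i, c0 * a i ≤ F (z i) := by
      intro i
      have h1 := F_min_bound hF hM0 (z i)
      have h2 : a i ≤ min |z i| M0 := by
        apply le_min (min_le_left _ _)
        exact le_trans (min_le_right _ _) (le_trans (abs_le_l2 h i) hball)
      have := mul_le_mul_of_nonneg_left h2 hc0n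
      rw [← hc0] at h1
      linarith
    have hsa : c0 * ∑ i, a i ≤ ∑ i, F (z i) := by
      rw [Finset.mul_sum]
      exact Finset.sum_le_sum fun i _ => hFa i
    have hha : ∀ i, |h i| ≤ a i + |v i| := by
      intro i
      rcases min_cases |z i| |h i| with ⟨he, _⟩ | ⟨he, hlt⟩
      · rw [ha]; simp only [he]
        have : |h i| - |z i| ≤ |h i - z i| := abs_sub_abs_le_abs_sub _ _
        rw [hv_eq i] at this
        linarith
      · rw [ha]; simp only [he]; linarith [abs_nonneg (v i)]
    have hlh : l2 h ≤ (∑ i, a i) + l2 v := by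
      have h1 : l2 h ≤ l2 (fun i => a i + |v i|) := by
        apply l2_mono
        intro i
        have := hha i
        rw [abs_of_nonneg (by positivity : (0:ℝ) ≤ a i + |v i|)]
        exact this
      have h2 : l2 (fun i => a i + |v i|) ≤ l2 a + l2 (fun i => |v i|) :=
        l2_add_le a (fun i => |v i|)
      have h3 : l2 (fun i => |v i|) = l2 v := by
        simp [l2, sq_abs]
      have h4 : l2 a ≤ ∑ i, a i := l2_le_sum han
      rw [h3] at h2
      linarith
    have : c0 * (l2 h - l2 v) ≤ c0 * ∑ i, a i := by
      apply mul_le_mul_of_nonneg_left _ hc0n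
      linarith
    linarith
  have hc1 : τ * (c0 * (l2 h - l2 v)) ≤ τ * ∑ i, F (z i) :=
    mul_le_mul_of_nonneg_left step3 hτn
  have hαn : (0:ℝ) < α := hα.1
  have hl2v : 0 ≤ l2 v := l2_nonneg v
  nlinarith [step1, step2, hc1]

lemma decomp {M N : ℕ} (A : Matrix (Fin M) (Fin N) ℝ) (h : Fin N → ℝ) :
    ∃ z v : Fin N → ℝ, h = z + v ∧ A.mulVec z = 0 ∧
      (∀ w : Fin N → ℝ, A.mulVec w = 0 → ∑ i, v i * w i = 0) := by
  classical
  let E := EuclideanSpace ℝ (Fin N)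
  let L : E →ₗ[ℝ] (Fin M → ℝ) :=
    A.mulVecLin ∘ₗ (WithLp.linearEquiv 2 ℝ (Fin N → ℝ)).toLinearMap
  let Ks : Submodule ℝ E := LinearMap.ker L
  haveI : CompleteSpace Ks := FiniteDimensional.complete ℝ Ks
  let hE : E := (WithLp.equiv 2 (Fin N → ℝ)).symm h
  let zE : E := (Ks.orthogonalProjectionOnto hE : E)
  let vE : E := hE - zE
  have hvmem : vE ∈ Ksᗮ := Submodule.sub_starProjection_mem_orthogonal hE
  refine ⟨(WithLp.equiv 2 (Fin N → ℝ)) zE, (WithLp.equiv 2 (Fin N → ℝ)) vE, ?_, ?_, ?_⟩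
  · show h = (zE : Fin N → ℝ) + (vE : Fin N → ℝ)
    have : hE = zE + vE := by simp [vE]
    exact congrArg (WithLp.equiv 2 (Fin N → ℝ)) this
  · have hker : zE ∈ Ks := (Ks.orthogonalProjectionOnto hE).2
    exact hker
  · intro w hw
    have hwmem : (WithLp.equiv 2 (Fin N → ℝ)).symm w ∈ Ks := by
      show L ((WithLp.equiv 2 (Fin N → ℝ)).symm w) = 0
      exact hw
    have := (Submodule.mem_orthogonal Ks vE).1 hvmem _ hwmem
    rw [PiLp.inner_apply] at this
    simp only [RCLike.inner_apply, starRingEnd_apply, star_trivial] at this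
    rw [← this]
    apply Finset.sum_congr rfl
    intro i _
    simp only [WithLp.equiv_apply, WithLp.equiv_symm_apply]

set_option maxHeartbeats 3000000 in
/-- Lemma 8, one APGG step: under the stated conditions the next
APGG iterate satisfies `‖x⁺ − x*‖₂² ≤ ‖x − x*‖₂² − (μ−1)dα²Nκ²`. -/
theorem stmt16 {M N : ℕ} (hMN : M < N) (F : ℝ → ℝ) (ρ α : ℝ)
    (hF : IsWCSM F ρ) (hα : IsAlpha F α)
    (A : Matrix (Fin M) (Fin N) ℝ) (B : Matrix (Fin M) (Fin M) ℝ) (K : ℕ)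
    (γ : ℝ) (hγ0 : 0 ≤ γ) (hγ1 : γ < 1)
    (hNSC : NSCBound (fun x => ∑ i, F (x i)) A K γ)
    (σ : ℝ) (hσ : 0 < σ)
    (hσmin : ∀ v : Fin N → ℝ,
      (∀ z : Fin N → ℝ, A.mulVec z = 0 → (∑ i, v i * z i) = 0) →
      σ * l2 v ≤ l2 (A.mulVec v))
    (M0 : ℝ) (hM0 : 0 < M0)
    (ζ : ℝ) (hζ : opNorm2 (1 - A * (A.transpose * B)) ≤ ζ) (hζ1 : ζ < 1)
    (C1 C2 C3 C4 C5 C6 C7 d : ℝ)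
    (hC1 : C1 = F M0 / M0 * ((1 - γ) / (1 + γ)))
    (hC2 : C2 = (α * Real.sqrt N + C1) / (C1 * σ))
    (hC5 : C5 = 2 * (ζ * α * Real.sqrt N * opNorm2 A) / (1 - ζ))
    (hC6 : C6 = 2 * opNorm2 B * C5 / C1 *
      (2 * (1 + ζ) * α * Real.sqrt N * opNorm2 A + (3 + ζ) * C5))
    (hC7 : C7 = 4 * opNorm2 B / C1 * (α * Real.sqrt N * opNorm2 A + C5))
    (hd : d = opNorm2 (1 - A.transpose * B * A) ^ 2)
    (hC3 : C3 = max (2 * C2 * C5) (2 * d * α ^ 2 * N / C1 + C6))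
    (hC4 : C4 = max (2 * C2) C7)
    (xs : Fin N → ℝ) (hxs : l0 xs ≤ K)
    (e : Fin M → ℝ) (y : Fin M → ℝ) (hy : y = A.mulVec xs + e)
    (κ μ : ℝ) (hκ : 0 < κ) (hμ : 1 < μ)
    (x : Fin N → ℝ)
    (hball : l2 (x - xs) ≤ M0)
    (hrho : -4 * ρ * l2 (x - xs) ≤ C1)
    (hres : l2 (y - A.mulVec x) ≤ C5 * κ)
    (hfar : μ * C3 * κ + C4 * l2 e ≤ l2 (x - xs))
    (g : Fin N → ℝ) (hg : ∀ i, g i ∈ genGrad F (x i))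
    (xp : Fin N → ℝ)
    (hxp : xp = (A.transpose * B).mulVec y + (1 - A.transpose * B * A).mulVec (x - κ • g)) :
    l2 (xp - xs) ^ 2 ≤ l2 (x - xs) ^ 2 - (μ - 1) * d * α ^ 2 * N * κ ^ 2 := by
  classical
  -- basic positivity facts
  have hα0 : (0:ℝ) < α := hα.1
  have hN1 : (1:ℝ) ≤ (N:ℝ) := by
    have : 1 ≤ N := by omega
    exact_mod_cast this
  have hsN : (0:ℝ) < Real.sqrt N := Real.sqrt_pos.2 (by linarith)
  obtain ⟨β, hβ⟩ : ∃ t : ℝ, t = α * Real.sqrt N := ⟨_, rfl⟩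
  have hβ0 : 0 < β := by rw [hβ]; exact mul_pos hα0 hsN
  have hβn : 0 ≤ β := le_of_lt hβ0
  have hβ2 : β ^ 2 = α ^ 2 * N := by
    rw [hβ, mul_pow, Real.sq_sqrt (by positivity : (0:ℝ) ≤ (N:ℝ))]
  have hκ0 : 0 ≤ κ := le_of_lt hκ
  have hμ0 : (0:ℝ) ≤ μ := by linarith
  have hFM0 : 0 < F M0 := by
    obtain ⟨t0, ht0⟩ := hF.nontrivial
    have hFnn := F_nonneg hF t0
    have ht0' : 0 < F |t0| := by
      rw [F_abs hF t0] at ht0 hFnn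
      exact lt_of_le_of_ne hFnn (Ne.symm ht0)
    have habs : 0 < |t0| := by
      rcases eq_or_lt_of_le (abs_nonneg t0) with h | h
      · rw [← h, hF.zero] at ht0'; linarith
      · exact h
    rcases le_or_gt M0 |t0| with hcase | hcase
    · have := hF.ratio_anti M0 |t0| hM0 hcase
      rw [div_le_div_iff₀ habs hM0] at this
      nlinarith
    · have := hF.mono |t0| M0 (abs_nonneg _) (le_of_lt hcase); linarith
  have hC1pos : 0 < C1 := by
    rw [hC1]
    apply mul_pos (div_pos hFM0 hM0)
    apply div_pos <;> linarith
  have hC10 : 0 ≤ C1 := le_of_lt hC1pos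
  have hC1ne : C1 ≠ 0 := ne_of_gt hC1pos
  obtain ⟨a, ha⟩ : ∃ t : ℝ, t = opNorm2 A := ⟨_, rfl⟩
  obtain ⟨b, hb⟩ : ∃ t : ℝ, t = opNorm2 B := ⟨_, rfl⟩
  have ha0 : 0 ≤ a := by rw [ha]; exact opNorm2_nonneg A
  have hb0 : 0 ≤ b := by rw [hb]; exact opNorm2_nonneg B
  have hζ0 : 0 ≤ ζ := le_trans (opNorm2_nonneg _) hζ
  rw [← ha] at hC5 hC6 hC7
  rw [← hb] at hC6 hC7
  rw [← hβ] at hC2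
  have hC5n : 0 ≤ C5 := by
    rw [hC5]
    apply div_nonneg _ (by linarith)
    have : 0 ≤ ζ * α * Real.sqrt N * a :=
      mul_nonneg (mul_nonneg (mul_nonneg hζ0 (le_of_lt hα0)) (le_of_lt hsN)) ha0
    linarith
  have hC2n : 0 ≤ C2 := by
    rw [hC2]
    apply div_nonneg (by linarith) (mul_nonneg hC10 (le_of_lt hσ))
  have hC6n : 0 ≤ C6 := by
    rw [hC6]
    apply mul_nonneg
    · apply div_nonneg _ hC10
      exact mul_nonneg (mul_nonneg (by norm_num) hb0) hC5n
    · apply add_nonneg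
      · apply mul_nonneg _ ha0
        apply mul_nonneg _ (le_of_lt hsN)
        apply mul_nonneg _ (le_of_lt hα0)
        apply mul_nonneg (by norm_num)
        linarith
      · exact mul_nonneg (by linarith) hC5n
  have hd0 : 0 ≤ d := by rw [hd]; positivity
  have hC3n : 0 ≤ C3 := by
    rw [hC3]
    exact le_trans (mul_nonneg (mul_nonneg (by norm_num) hC2n) hC5n) (le_max_left _ _)
  -- decomposition
  obtain ⟨z, v, hzv, hz, hv⟩ := decomp A (x - xs)
  obtain ⟨H, hH⟩ : ∃ t : ℝ, t = l2 (x - xs) := ⟨_, rfl⟩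
  obtain ⟨E, hE⟩ : ∃ t : ℝ, t = l2 e := ⟨_, rfl⟩
  obtain ⟨V, hV⟩ : ∃ t : ℝ, t = l2 v := ⟨_, rfl⟩
  obtain ⟨R, hR⟩ : ∃ t : ℝ, t = l2 (y - A.mulVec x) := ⟨_, rfl⟩
  rw [← hH] at hball hrho
  rw [← hH, ← hE] at hfar
  rw [← hR] at hres
  have hH0 : 0 ≤ H := hH ▸ l2_nonneg _
  have hE0 : 0 ≤ E := hE ▸ l2_nonneg _
  have hR0 : 0 ≤ R := hR ▸ l2_nonneg _
  have hV0 : 0 ≤ V := hV ▸ l2_nonneg _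
  have hRC5 : R ≤ C5 * κ := hres
  -- A (x - xs) = e - (y - A x)
  have hAh : A.mulVec (x - xs) = e - (y - A.mulVec x) := by
    rw [Matrix.mulVec_sub, hy]
    funext i
    simp only [Pi.sub_apply, Pi.add_apply]
    ring
  have hAhle : l2 (A.mulVec (x - xs)) ≤ E + R := by
    rw [hAh, sub_eq_add_neg]
    calc l2 (e + -(y - A.mulVec x)) ≤ l2 e + l2 (-(y - A.mulVec x)) := l2_add_le _ _
      _ = E + R := by rw [l2_neg, ← hE, ← hR]
  -- σ V ≤ E + R
  have hAv : A.mulVec v = A.mulVec (x - xs) := by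
    rw [hzv, Matrix.mulVec_add, hz]
    simp
  have hσV : σ * V ≤ E + R := by
    have h0 := hσmin v hv
    rw [hAv] at h0
    rw [hV]
    exact le_trans h0 hAhle
  -- bound on g
  have hg2 : l2 g ≤ β := by
    have h1 : l2 g ≤ l2 (fun _ : Fin N => α) := by
      apply l2_mono
      intro i
      rw [abs_of_pos hα0]
      exact grad_abs_le hF hα (hg i)
    have h2 : l2 (fun _ : Fin N => α) = Real.sqrt N * α := by
      rw [l2]
      rw [Finset.sum_const, Finset.card_univ, Fintype.card_fin, nsmul_eq_mul]
      rw [Real.sqrt_mul (by positivity), Real.sqrt_sq (le_of_lt hα0)]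
    rw [h2] at h1
    rw [hβ, mul_comm α (Real.sqrt N)]
    linarith
  have hg0 : 0 ≤ l2 g := l2_nonneg g
  -- matrices
  set P : Matrix (Fin N) (Fin N) ℝ := 1 - A.transpose * B * A with hP
  set Q : Matrix (Fin M) (Fin M) ℝ := 1 - A * (A.transpose * B) with hQ
  have hopP : opNorm2 P ^ 2 = d := by rw [hd, hP]
  have hopQ : opNorm2 Q ≤ ζ := hζ
  -- w = (h - κ • Pg) + s
  have hw : xp - xs = ((x - xs) - κ • P.mulVec g) + (A.transpose * B).mulVec (y - A.mulVec x) := by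
    rw [hxp]
    have e1 : P.mulVec (x - κ • g) = P.mulVec x - κ • P.mulVec g := by
      rw [Matrix.mulVec_sub, Matrix.mulVec_smul]
    have e2 : P.mulVec x = x - (A.transpose * B).mulVec (A.mulVec x) := by
      rw [hP, Matrix.sub_mulVec, Matrix.one_mulVec, Matrix.mulVec_mulVec]
    have e3 : (A.transpose * B).mulVec (y - A.mulVec x)
        = (A.transpose * B).mulVec y - (A.transpose * B).mulVec (A.mulVec x) :=
      Matrix.mulVec_sub _ _ _
    rw [e1, e2, e3]
    abel
  -- expansion
  have hexp : l2 (xp - xs) ^ 2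
      = H ^ 2 - 2 * κ * ip (x - xs) (P.mulVec g) + κ ^ 2 * l2 (P.mulVec g) ^ 2
        + 2 * ip ((x - xs) - κ • P.mulVec g) ((A.transpose * B).mulVec (y - A.mulVec x))
        + l2 ((A.transpose * B).mulVec (y - A.mulVec x)) ^ 2 := by
    rw [hw, l2_sq_expand, l2_sq_sub_smul, ← hH]
  -- bound ‖Pg‖² ≤ d β²
  have hPgn : l2 (P.mulVec g) ^ 2 ≤ d * β ^ 2 := by
    have h1 : l2 (P.mulVec g) ≤ opNorm2 P * l2 g := l2_mulVec_le P g
    have h2 : opNorm2 P * l2 g ≤ opNorm2 P * β :=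
      mul_le_mul_of_nonneg_left hg2 (opNorm2_nonneg P)
    have h3 : l2 (P.mulVec g) ≤ opNorm2 P * β := le_trans h1 h2
    have h4 : l2 (P.mulVec g) ^ 2 ≤ (opNorm2 P * β) ^ 2 :=
      pow_le_pow_left₀ (l2_nonneg _) h3 2
    have h5 : (opNorm2 P * β) ^ 2 = d * β ^ 2 := by
      rw [← hopP]; ring
    linarith
  -- bound l2 (A.mulVec g) ≤ a * β
  have hAg : l2 (A.mulVec g) ≤ a * β := by
    calc l2 (A.mulVec g) ≤ opNorm2 A * l2 g := l2_mulVec_le A g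
      _ ≤ a * β := by rw [← ha]; exact mul_le_mul_of_nonneg_left hg2 ha0
  -- bound on ip h Pg from below
  have hipPg : ip (x - xs) g - (E + R) * (b * (a * β)) ≤ ip (x - xs) (P.mulVec g) := by
    have e1 : P.mulVec g = g - A.transpose.mulVec (B.mulVec (A.mulVec g)) := by
      rw [hP, Matrix.sub_mulVec, Matrix.one_mulVec, ← Matrix.mulVec_mulVec,
        ← Matrix.mulVec_mulVec]
    have e2' : ip (x - xs) (P.mulVec g)
        = ip (x - xs) g - ip (x - xs) (A.transpose.mulVec (B.mulVec (A.mulVec g))) := by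
      rw [e1]
      unfold ip
      rw [← Finset.sum_sub_distrib]
      apply Finset.sum_congr rfl
      intro i _
      simp only [Pi.sub_apply]
      ring
    have e2 : ip (x - xs) (P.mulVec g)
        = ip (x - xs) g - ip (A.mulVec (x - xs)) (B.mulVec (A.mulVec g)) := by
      rw [e2', ip_transpose]
    have e3 : ip (A.mulVec (x - xs)) (B.mulVec (A.mulVec g)) ≤ (E + R) * (b * (a * β)) := by
      calc ip (A.mulVec (x - xs)) (B.mulVec (A.mulVec g))
          ≤ l2 (A.mulVec (x - xs)) * l2 (B.mulVec (A.mulVec g)) := ip_le_l2 _ _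
        _ ≤ (E + R) * (b * (a * β)) := by
            apply mul_le_mul hAhle _ (l2_nonneg _) (by linarith)
            calc l2 (B.mulVec (A.mulVec g)) ≤ opNorm2 B * l2 (A.mulVec g) := l2_mulVec_le B _
              _ ≤ b * (a * β) := by rw [← hb]; exact mul_le_mul_of_nonneg_left hAg hb0
    rw [e2]; linarith
  -- lower bound on ip h g (the key lemma)
  have hJkey := key_J F ρ α hF hα hM0 hγ0 hγ1 A K hNSC xs x z v hxs
    hzv hz (by rw [hH] at hball; exact hball)
  rw [← hV, ← hC1, ← hβ, ← hH] at hJkey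
  have hJkey' : C1 * H - (C1 + β) * V ≤ (∑ i, F (x i)) - ∑ i, F (xs i) := hJkey
  have hsubgrad : (∑ i, F (x i)) - (∑ i, F (xs i)) + ρ * H ^ 2 ≤ ip g (x - xs) := by
    have h1 : ∀ i, F (x i) - F (xs i) + ρ * (x i - xs i) ^ 2 ≤ g i * (x i - xs i) := by
      intro i
      have := subgrad hF hα (hg i) (xs i)
      have e : (xs i - x i) ^ 2 = (x i - xs i) ^ 2 := by ring
      rw [e] at this
      have e2 : g i * (xs i - x i) = -(g i * (x i - xs i)) := by ring
      rw [e2] at this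
      linarith
    have h2 : ∑ i, (F (x i) - F (xs i) + ρ * (x i - xs i) ^ 2)
        ≤ ∑ i, g i * (x i - xs i) := Finset.sum_le_sum fun i _ => h1 i
    have h3 : ∑ i, (F (x i) - F (xs i) + ρ * (x i - xs i) ^ 2)
        = (∑ i, F (x i)) - (∑ i, F (xs i)) + ρ * ∑ i, (x i - xs i) ^ 2 := by
      rw [Finset.sum_add_distrib, Finset.sum_sub_distrib, ← Finset.mul_sum]
    have h4 : ρ * ∑ i, (x i - xs i) ^ 2 = ρ * H ^ 2 := by
      rw [hH, sq_l2]
      apply congrArg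
      apply Finset.sum_congr rfl
      intro i _
      simp [Pi.sub_apply]
    have h5 : ip g (x - xs) = ∑ i, g i * (x i - xs i) := by
      unfold ip
      apply Finset.sum_congr rfl
      intro i _
      simp [Pi.sub_apply]
    rw [h5]
    rw [h3, h4] at h2
    exact h2
  have hrhoH : -(C1 / 4) * H ≤ ρ * H ^ 2 := by
    have h0 := mul_le_mul_of_nonneg_right hrho hH0
    nlinarith only [h0]
  -- (C1+β) V ≤ C1 C2 (E+R)
  have hCV : (C1 + β) * V ≤ C1 * C2 * (E + R) := by
    have hσne : σ ≠ 0 := ne_of_gt hσ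
    have hc2 : C1 * C2 = (β + C1) / σ := by
      rw [hC2]
      field_simp
      try ring
    rw [hc2]
    have h1 : (C1 + β) * V = ((β + C1) / σ) * (σ * V) := by
      field_simp; ring
    rw [h1]
    apply mul_le_mul_of_nonneg_left hσV
    apply div_nonneg (by linarith) (le_of_lt hσ)
  -- combine: lower bound on ip h g
  have hiphg : C1 * H - C1 * C2 * (E + R) - (C1/4) * H ≤ ip (x - xs) g := by
    have h2 : ip g (x - xs) = ip (x - xs) g := ip_comm g (x - xs)
    rw [h2] at hsubgrad
    linarith only [hJkey', hsubgrad, hrhoH, hCV]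
  -- cross term
  have hAu : l2 (A.mulVec ((x - xs) - κ • P.mulVec g)) ≤ (E + R) + κ * (ζ * (a * β)) := by
    have e1 : A.mulVec ((x - xs) - κ • P.mulVec g)
        = A.mulVec (x - xs) - κ • (Q.mulVec (A.mulVec g)) := by
      rw [Matrix.mulVec_sub, Matrix.mulVec_smul]
      congr 2
      rw [Matrix.mulVec_mulVec, Matrix.mulVec_mulVec]
      congr 1
      rw [hP, hQ]
      rw [Matrix.mul_sub, Matrix.sub_mul, Matrix.mul_one, Matrix.one_mul]
      rw [← Matrix.mul_assoc, ← Matrix.mul_assoc]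
    rw [e1, sub_eq_add_neg]
    calc l2 (A.mulVec (x - xs) + -(κ • Q.mulVec (A.mulVec g)))
        ≤ l2 (A.mulVec (x - xs)) + l2 (-(κ • Q.mulVec (A.mulVec g))) := l2_add_le _ _
      _ ≤ (E + R) + κ * (ζ * (a * β)) := by
          rw [l2_neg, l2_smul, abs_of_pos hκ]
          have h1 : l2 (Q.mulVec (A.mulVec g)) ≤ ζ * (a * β) := by
            calc l2 (Q.mulVec (A.mulVec g)) ≤ opNorm2 Q * l2 (A.mulVec g) := l2_mulVec_le _ _
              _ ≤ ζ * (a * β) := by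
                  apply mul_le_mul hopQ hAg (l2_nonneg _) hζ0
          have h2 : κ * l2 (Q.mulVec (A.mulVec g)) ≤ κ * (ζ * (a * β)) :=
            mul_le_mul_of_nonneg_left h1 hκ0
          linarith [hAhle]
  have hcross : ip ((x - xs) - κ • P.mulVec g) ((A.transpose * B).mulVec (y - A.mulVec x))
      ≤ ((E + R) + κ * (ζ * (a * β))) * (b * R) := by
    have hseq : (A.transpose * B).mulVec (y - A.mulVec x)
        = A.transpose.mulVec (B.mulVec (y - A.mulVec x)) := by
      rw [Matrix.mulVec_mulVec]
    rw [hseq, ip_transpose]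
    calc ip (A.mulVec ((x - xs) - κ • P.mulVec g)) (B.mulVec (y - A.mulVec x))
        ≤ l2 (A.mulVec ((x - xs) - κ • P.mulVec g)) * l2 (B.mulVec (y - A.mulVec x)) :=
          ip_le_l2 _ _
      _ ≤ ((E + R) + κ * (ζ * (a * β))) * (b * R) := by
          apply mul_le_mul hAu _ (l2_nonneg _) ?_
          · calc l2 (B.mulVec (y - A.mulVec x)) ≤ opNorm2 B * l2 (y - A.mulVec x) :=
                l2_mulVec_le B _
              _ = b * R := by rw [← hb, ← hR]
          · have : 0 ≤ κ * (ζ * (a * β)) :=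
              mul_nonneg hκ0 (mul_nonneg hζ0 (mul_nonneg ha0 hβn))
            linarith
  -- ‖s‖²
  have hss : l2 ((A.transpose * B).mulVec (y - A.mulVec x)) ^ 2 ≤ (1 + ζ) * R * (b * R) := by
    have e1 : l2 ((A.transpose * B).mulVec (y - A.mulVec x)) ^ 2
        = ip ((A.transpose * B).mulVec (y - A.mulVec x))
            ((A.transpose * B).mulVec (y - A.mulVec x)) := by
      rw [sq_l2]
      unfold ip
      exact Finset.sum_congr rfl fun i _ => pow_two _
    have hseq : (A.transpose * B).mulVec (y - A.mulVec x)
        = A.transpose.mulVec (B.mulVec (y - A.mulVec x)) := by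
      rw [Matrix.mulVec_mulVec]
    have e3 : A.mulVec (A.transpose.mulVec (B.mulVec (y - A.mulVec x)))
        = (y - A.mulVec x) - Q.mulVec (y - A.mulVec x) := by
      rw [Matrix.mulVec_mulVec, Matrix.mulVec_mulVec, hQ]
      rw [Matrix.sub_mulVec, Matrix.one_mulVec, Matrix.mul_assoc]
      abel
    have e4 : l2 (A.mulVec (A.transpose.mulVec (B.mulVec (y - A.mulVec x)))) ≤ (1 + ζ) * R := by
      rw [e3, sub_eq_add_neg]
      calc l2 ((y - A.mulVec x) + -(Q.mulVec (y - A.mulVec x)))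
          ≤ l2 (y - A.mulVec x) + l2 (-(Q.mulVec (y - A.mulVec x))) := l2_add_le _ _
        _ ≤ (1 + ζ) * R := by
            rw [l2_neg]
            have h1 : l2 (Q.mulVec (y - A.mulVec x)) ≤ ζ * R := by
              calc l2 (Q.mulVec (y - A.mulVec x)) ≤ opNorm2 Q * l2 (y - A.mulVec x) :=
                  l2_mulVec_le _ _
                _ ≤ ζ * R := by
                    rw [← hR]
                    apply mul_le_mul hopQ (le_refl _) (hR ▸ hR0) hζ0
            have h2 : l2 (y - A.mulVec x) = R := by rw [hR]
            linarith
    rw [e1]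
    conv_lhs => rw [hseq]
    rw [ip_transpose]
    calc ip (A.mulVec (A.transpose.mulVec (B.mulVec (y - A.mulVec x)))) (B.mulVec (y - A.mulVec x))
        ≤ l2 (A.mulVec (A.transpose.mulVec (B.mulVec (y - A.mulVec x))))
            * l2 (B.mulVec (y - A.mulVec x)) := ip_le_l2 _ _
      _ ≤ ((1 + ζ) * R) * (b * R) := by
          apply mul_le_mul e4 _ (l2_nonneg _) (mul_nonneg (by linarith) hR0)
          calc l2 (B.mulVec (y - A.mulVec x)) ≤ opNorm2 B * l2 (y - A.mulVec x) :=
              l2_mulVec_le B _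
            _ = b * R := by rw [← hb, ← hR]
    -- note: ip_transpose rewrote using hseq
  -- constants identities
  have hidC6 : C1 * C6 = 2 * b * C5 * (2 * (1 + ζ) * a * β + (3 + ζ) * C5) := by
    have e : C1 * C6 = C1 / C1 * (2 * b * C5 * (2 * (1 + ζ) * a * β + (3 + ζ) * C5)) := by
      rw [hC6, hβ]; ring
    rw [e, div_self hC1ne, one_mul]
  have hidC7 : C1 * C7 = 4 * b * (a * β + C5) := by
    have e : C1 * C7 = C1 / C1 * (4 * b * (a * β + C5)) := by
      rw [hC7, hβ]; ring
    rw [e, div_self hC1ne, one_mul]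
  -- coefficient inequalities
  have hI : μ * d * β^2 + 2 * C1 * C2 * C5 + (C1/2) * C6 ≤ (3 * C1 * μ / 2) * C3 := by
    have hq : 2 * d * β^2 / C1 + C6 ≤ C3 := by
      have e : 2 * d * β^2 / C1 = 2 * d * α^2 * N / C1 := by rw [hβ2]; ring
      rw [hC3, e]
      exact le_max_right _ _
    have hp : 2 * C2 * C5 ≤ C3 := by
      rw [hC3]; exact le_max_left _ _
    have h1 : μ * d * β^2 + (C1/2) * C6 ≤ (μ * C1 / 2) * (2 * d * β^2 / C1 + C6) := by
      have e : (μ * C1 / 2) * (2 * d * β^2 / C1) = μ * d * β^2 := by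
        have e2 : (μ * C1 / 2) * (2 * d * β^2 / C1) = C1 / C1 * (μ * d * β^2) := by ring
        rw [e2, div_self hC1ne, one_mul]
      have h2 : (C1/2) * C6 ≤ (μ * C1/2) * C6 := by
        have h9 : 0 ≤ (μ - 1) * C1 * C6 :=
          mul_nonneg (mul_nonneg (by linarith) hC10) hC6n
        linarith only [h9]
      linarith only [e, h2]
    have h3 : 2 * C1 * C2 * C5 ≤ C1 * C3 := by
      have h9 := mul_le_mul_of_nonneg_left hp hC10
      linarith only [h9]
    have h4 : C1 * C3 ≤ μ * C1 * C3 := by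
      have h9 : 0 ≤ (μ - 1) * (C1 * C3) :=
        mul_nonneg (by linarith) (mul_nonneg hC10 hC3n)
      linarith only [h9]
    have h5 : (μ * C1 / 2) * (2 * d * β^2 / C1 + C6) ≤ (μ * C1 / 2) * C3 :=
      mul_le_mul_of_nonneg_left hq (div_nonneg (mul_nonneg hμ0 hC10) (by norm_num))
    linarith only [h1, h3, h4, h5]
  have hII : 2 * C1 * C2 + 2 * b * (a * β + C5) ≤ (3 * C1 / 2) * C4 := by
    have hp : 2 * C2 ≤ C4 := by rw [hC4]; exact le_max_left _ _
    have hq : C7 ≤ C4 := by rw [hC4]; exact le_max_right _ _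
    have h1 : 2 * C1 * C2 ≤ C1 * C4 := by
      have h9 := mul_le_mul_of_nonneg_left hp hC10
      linarith only [h9]
    have h2 : 2 * b * (a * β + C5) = (C1/2) * C7 := by
      linarith only [hidC7]
    have h3 : (C1/2) * C7 ≤ (C1/2) * C4 := by
      have h9 := mul_le_mul_of_nonneg_left hq (div_nonneg hC10 (by norm_num : (0:ℝ) ≤ 2))
      linarith only [h9]
    linarith only [h1, h2, h3]
  -- the main estimate
  have hHlow : μ * C3 * κ + C4 * E ≤ H := hfar
  have hT0 : 0 ≤ E + R := add_nonneg hE0 hR0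
  have hTle : E + R ≤ E + C5 * κ := by linarith
  have hmain : μ * d * β^2 * κ^2 + 2 * κ * (C1 * C2 + a * b * β) * (E + R)
      + 2 * ((E + R) + κ * (ζ * (a * β))) * (b * R) + (1 + ζ) * R * (b * R)
      ≤ (3 * C1 / 2) * κ * H := by
    have hco : 0 ≤ C1 * C2 + a * b * β :=
      add_nonneg (mul_nonneg hC10 hC2n) (mul_nonneg (mul_nonneg ha0 hb0) hβn)
    have hbR : 0 ≤ b * R := mul_nonneg hb0 hR0
    have hζaβ : 0 ≤ κ * (ζ * (a * β)) :=
      mul_nonneg hκ0 (mul_nonneg hζ0 (mul_nonneg ha0 hβn))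
    have c1 : 2 * κ * (C1 * C2 + a * b * β) * (E + R)
        ≤ 2 * κ * (C1 * C2 + a * b * β) * (E + C5 * κ) := by
      apply mul_le_mul_of_nonneg_left hTle
      exact mul_nonneg (mul_nonneg (by norm_num) hκ0) hco
    have c2 : 2 * ((E + R) + κ * (ζ * (a * β))) * (b * R)
        ≤ 2 * ((E + C5 * κ) + κ * (ζ * (a * β))) * (b * (C5 * κ)) := by
      apply mul_le_mul
      · linarith
      · exact mul_le_mul_of_nonneg_left hRC5 hb0
      · exact hbR
      · have : (0:ℝ) ≤ C5 * κ := mul_nonneg hC5n hκ0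
        linarith
    have c3 : (1 + ζ) * R * (b * R) ≤ (1 + ζ) * (C5 * κ) * (b * (C5 * κ)) := by
      apply mul_le_mul
      · apply mul_le_mul_of_nonneg_left hRC5 (by linarith)
      · exact mul_le_mul_of_nonneg_left hRC5 hb0
      · exact hbR
      · exact mul_nonneg (by linarith) (mul_nonneg hC5n hκ0)
    have csum : μ * d * β^2 * κ^2 + 2 * κ * (C1 * C2 + a * b * β) * (E + C5 * κ)
        + 2 * ((E + C5 * κ) + κ * (ζ * (a * β))) * (b * (C5 * κ))
        + (1 + ζ) * (C5 * κ) * (b * (C5 * κ))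
        = κ^2 * (μ * d * β^2 + 2 * C1 * C2 * C5 + (2 * a * b * β * C5
            + 2 * ζ * a * b * β * C5 + (3 + ζ) * b * C5^2))
          + κ * E * (2 * C1 * C2 + 2 * a * b * β + 2 * b * C5) := by
      ring
    have hC6' : (C1/2) * C6 = 2 * a * b * β * C5 + 2 * ζ * a * b * β * C5 + (3 + ζ) * b * C5^2 := by
      linarith only [hidC6]
    have s1 : κ^2 * (μ * d * β^2 + 2 * C1 * C2 * C5 + (2 * a * b * β * C5
          + 2 * ζ * a * b * β * C5 + (3 + ζ) * b * C5^2))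
        ≤ κ^2 * ((3 * C1 * μ / 2) * C3) := by
      apply mul_le_mul_of_nonneg_left _ (sq_nonneg κ)
      linarith only [hI, hC6']
    have s2 : κ * E * (2 * C1 * C2 + 2 * a * b * β + 2 * b * C5)
        ≤ κ * E * ((3 * C1 / 2) * C4) := by
      apply mul_le_mul_of_nonneg_left _ (mul_nonneg hκ0 hE0)
      linarith only [hII]
    have final : κ^2 * ((3 * C1 * μ / 2) * C3) + κ * E * ((3 * C1 / 2) * C4)
        ≤ (3 * C1 / 2) * κ * H := by
      have e : κ^2 * ((3 * C1 * μ / 2) * C3) + κ * E * ((3 * C1 / 2) * C4)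
          = (3 * C1 / 2) * κ * (μ * C3 * κ + C4 * E) := by ring
      rw [e]
      apply mul_le_mul_of_nonneg_left hHlow
      exact mul_nonneg (div_nonneg (by linarith) (by norm_num)) hκ0
    linarith only [c1, c2, c3, csum, s1, s2, final]
  -- put everything together
  have hiphPg : (3 * C1 / 4) * H - (C1 * C2 + a * b * β) * (E + R)
      ≤ ip (x - xs) (P.mulVec g) := by
    have expand : (C1 * C2 + a * b * β) * (E + R)
        = C1 * C2 * (E + R) + (E + R) * (b * (a * β)) := by ring
    linarith only [hiphg, hipPg, expand]
  have hfin : l2 (xp - xs) ^ 2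
      ≤ H^2 - 2*κ*((3 * C1 / 4) * H - (C1 * C2 + a * b * β) * (E + R))
      + κ^2 * (d * β^2) + 2 * (((E + R) + κ * (ζ * (a * β))) * (b * R))
      + (1 + ζ) * R * (b * R) := by
    rw [hexp]
    have t1 : -(2 * κ * ip (x - xs) (P.mulVec g))
        ≤ -(2 * κ * ((3 * C1 / 4) * H - (C1 * C2 + a * b * β) * (E + R))) := by
      have h9 := mul_le_mul_of_nonneg_left hiphPg (by linarith : (0:ℝ) ≤ 2 * κ)
      linarith only [h9]
    have t2 : κ ^ 2 * l2 (P.mulVec g) ^ 2 ≤ κ^2 * (d * β^2) :=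
      mul_le_mul_of_nonneg_left hPgn (sq_nonneg κ)
    linarith only [t1, t2, hcross, hss]
  have goal2 : l2 (xp - xs) ^ 2 ≤ H^2 - (μ - 1) * d * β^2 * κ^2 := by
    linarith only [hmain, hfin]
  have hfinal : (μ - 1) * d * α^2 * N * κ^2 = (μ - 1) * d * β^2 * κ^2 := by
    rw [hβ2]; ring
  rw [← hH]
  linarith only [goal2, hfinal]
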